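/- Let F : ℝ^n → ℝ be differentiable and β-smooth (‖∇F(w₁) − ∇F(w₂)‖ ≤ β‖w₁ − w₂‖ for all w₁, w₂). Let w, d ∈ ℝ^n, and consider one momentum gradient descent step d' = γd + ∇F(w), w' = w − ηd'. Suppose 0 < ηβ < 1, 0 ≤ γ < 1, and there exist constants p ≥ 0 and c ≥ 0 with ‖d‖ ≤ p‖∇F(w)‖ and ⟨∇F(w), d⟩ ≥ c‖∇F(w)‖². Then F(w') − F(w) ≤ −α‖∇F(w)‖², where α = η(1 − βη/2) + ηγ(1 − βη)c − βη²γ²p²/2. -/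

import Mathlib

open intervalIntegral in
lemma descent_lemma {n : ℕ} (F : EuclideanSpace ℝ (Fin n) → ℝ)
    (hdiff : Differentiable ℝ F) {β : ℝ} (hβ : 0 ≤ β)
    (hsmooth : ∀ w₁ w₂, ‖gradient F w₁ - gradient F w₂‖ ≤ β * ‖w₁ - w₂‖)
    (x v : EuclideanSpace ℝ (Fin n)) :
    F (x + v) - F x ≤ (inner ℝ (gradient F x) v : ℝ) + β / 2 * ‖v‖ ^ 2 := by
  have hgc : Continuous (gradient F) :=
    (LipschitzWith.of_dist_le_mul (K := ⟨β, hβ⟩) (fun a b => by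
      rw [dist_eq_norm, dist_eq_norm]; exact hsmooth a b)).continuous
  set φ : ℝ → ℝ := fun t => F (x + t • v) with hφ
  have hderiv : ∀ t : ℝ, HasDerivAt φ (inner ℝ (gradient F (x + t • v)) v : ℝ) t := by
    intro t
    have hcurve : HasDerivAt (fun t : ℝ => x + t • v) v t := by
      simpa using ((hasDerivAt_id t).smul_const v).const_add x
    have hg : HasGradientAt F (gradient F (x + t • v)) (x + t • v) :=
      (hdiff (x + t • v)).hasGradientAt
    have := hg.hasFDerivAt.comp_hasDerivAt t hcurve
    simpa [hφ, Function.comp_def] using this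
  have hcont : Continuous fun t : ℝ => (inner ℝ (gradient F (x + t • v)) v : ℝ) :=
    (hgc.comp (by continuity)).inner continuous_const
  have hint : IntervalIntegrable (fun t : ℝ => (inner ℝ (gradient F (x + t • v)) v : ℝ))
      MeasureTheory.volume 0 1 := hcont.intervalIntegrable 0 1
  have heq : ∫ t in (0:ℝ)..1, (inner ℝ (gradient F (x + t • v)) v : ℝ) = φ 1 - φ 0 :=
    integral_eq_sub_of_hasDerivAt (fun t _ => hderiv t) hint
  have hφ1 : φ 1 = F (x + v) := by simp [hφ]
  have hφ0 : φ 0 = F x := by simp [hφ]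
  have c1 : IntervalIntegrable (fun _ : ℝ => (inner ℝ (gradient F x) v : ℝ))
      MeasureTheory.volume 0 1 := intervalIntegrable_const
  have c2 : IntervalIntegrable (fun t : ℝ => β * t * ‖v‖ ^ 2)
      MeasureTheory.volume 0 1 := (by continuity : Continuous fun t : ℝ =>
        β * t * ‖v‖ ^ 2).intervalIntegrable 0 1
  have hmono : ∫ t in (0:ℝ)..1, (inner ℝ (gradient F (x + t • v)) v : ℝ)
      ≤ ∫ t in (0:ℝ)..1, ((inner ℝ (gradient F x) v : ℝ) + β * t * ‖v‖ ^ 2) := by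
    apply integral_mono_on (by norm_num) hint (c1.add c2)
    intro t ht
    have h1 := real_inner_le_norm (gradient F (x + t • v) - gradient F x) v
    have h2 := hsmooth (x + t • v) x
    have h3 : ‖x + t • v - x‖ = t * ‖v‖ := by
      simp [norm_smul, abs_of_nonneg ht.1]
    rw [h3] at h2
    rw [inner_sub_left] at h1
    have hv : (0:ℝ) ≤ ‖v‖ := norm_nonneg v
    nlinarith [mul_le_mul_of_nonneg_right h2 hv]
  have hval : ∫ t in (0:ℝ)..1, ((inner ℝ (gradient F x) v : ℝ) + β * t * ‖v‖ ^ 2)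
      = (inner ℝ (gradient F x) v : ℝ) + β / 2 * ‖v‖ ^ 2 := by
    rw [integral_add c1 c2]
    simp [mul_comm, mul_assoc]
    ring
  rw [heq, hφ1, hφ0] at hmono
  linarith [hmono.trans_eq hval]

/-- One momentum gradient descent step on a β-smooth function decreases
the value: with `d' = γd + ∇F(w)`, `w' = w − ηd'`, `0 < ηβ < 1`, `0 ≤ γ < 1`,
`‖d‖ ≤ p‖∇F(w)‖` and `⟨∇F(w), d⟩ ≥ c‖∇F(w)‖²`, one has
`F(w') − F(w) ≤ −α‖∇F(w)‖²` where
`α = η(1 − βη/2) + ηγ(1 − βη)c − βη²γ²p²/2`. -/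
theorem mgd_one_step_descent
    (n : ℕ) (F : EuclideanSpace ℝ (Fin n) → ℝ)
    (hdiff : Differentiable ℝ F)
    (β η γ p c α : ℝ)
    (hsmooth : ∀ w₁ w₂, ‖gradient F w₁ - gradient F w₂‖ ≤ β * ‖w₁ - w₂‖)
    (hηβ0 : 0 < η * β) (hηβ1 : η * β < 1)
    (hγ0 : 0 ≤ γ) (hγ1 : γ < 1)
    (hp : 0 ≤ p) (hc : 0 ≤ c)
    (w d d' w' : EuclideanSpace ℝ (Fin n))
    (hd' : d' = γ • d + gradient F w)
    (hw' : w' = w - η • d')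
    (hdb : ‖d‖ ≤ p * ‖gradient F w‖)
    (hinner : c * ‖gradient F w‖ ^ 2 ≤ (inner ℝ (gradient F w) d : ℝ))
    (hα : α = η * (1 - β * η / 2) + η * γ * (1 - β * η) * c - β * η ^ 2 * γ ^ 2 * p ^ 2 / 2) :
    F w' - F w ≤ -α * ‖gradient F w‖ ^ 2 := by
  rcases Nat.eq_zero_or_pos n with hn | hn
  · -- trivial case: the space is a point
    subst hn
    have hsub : ∀ x y : EuclideanSpace ℝ (Fin 0), x = y := by
      intro x y; ext i; exact i.elim0
    have h1 : w' = w := hsub w' w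
    have h2 : gradient F w = 0 := hsub _ _
    rw [h1, h2]
    simp
  · -- get 0 ≤ β
    have hβ : 0 ≤ β := by
      have hne : (EuclideanSpace.single ⟨0, hn⟩ (1:ℝ) : EuclideanSpace ℝ (Fin n)) ≠ 0 := by
        intro h
        have := congrArg (fun u => u ⟨0, hn⟩) h
        simp [EuclideanSpace.single] at this
      have h2 := hsmooth (EuclideanSpace.single ⟨0, hn⟩ (1:ℝ)) 0
      have h3 : (0:ℝ) < ‖(EuclideanSpace.single ⟨0, hn⟩ (1:ℝ) : EuclideanSpace ℝ (Fin n)) - 0‖ := by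
        simpa [sub_zero] using norm_pos_iff.mpr hne
      nlinarith [norm_nonneg (gradient F (EuclideanSpace.single ⟨0, hn⟩ (1:ℝ)) - gradient F 0)]
    have hβpos : 0 < β := by
      rcases hβ.lt_or_eq with h | h
      · exact h
      · exfalso; rw [← h] at hηβ0; simp at hηβ0
    have hη : 0 < η := by nlinarith
    set g := gradient F w with hg
    have key := descent_lemma F hdiff hβ hsmooth w (-(η • d'))
    have hw'' : w' = w + -(η • d') := by rw [hw']; abel
    rw [← hw''] at key
    have hi1 : (inner ℝ g (-(η • d')) : ℝ) = -η * (γ * (inner ℝ g d : ℝ) + ‖g‖ ^ 2) := by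
      rw [hd', inner_neg_right, inner_smul_right, inner_add_right, inner_smul_right,
        real_inner_self_eq_norm_sq]
      ring
    have hi2 : ‖-(η • d')‖ ^ 2 = η ^ 2 * (γ ^ 2 * ‖d‖ ^ 2 + 2 * γ * (inner ℝ g d : ℝ) + ‖g‖ ^ 2) := by
      rw [norm_neg, norm_smul, hd']
      have h4 := norm_add_sq_real (γ • d) g
      rw [norm_smul, inner_smul_left, real_inner_comm g d] at h4
      simp only [Real.norm_eq_abs, abs_of_nonneg hγ0, abs_of_nonneg hη.le, conj_trivial] at h4 ⊢
      rw [mul_pow, h4]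
      ring
    rw [hi1, hi2] at key
    have hdb2 : ‖d‖ ^ 2 ≤ p ^ 2 * ‖g‖ ^ 2 := by
      have := pow_le_pow_left₀ (norm_nonneg d) hdb 2
      rwa [mul_pow] at this
    have hcoef : 0 ≤ η * γ * (1 - β * η) := by
      have h1 : β * η < 1 := by rwa [mul_comm] at hηβ1
      exact mul_nonneg (mul_nonneg hη.le hγ0) (by linarith)
    have hA := mul_le_mul_of_nonneg_left hinner hcoef
    have hB := mul_le_mul_of_nonneg_left hdb2
      (show (0:ℝ) ≤ β * η ^ 2 * γ ^ 2 / 2 by positivity)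
    subst hα
    linarith [key, hA, hB]
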